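/- Let X_1,…,X_k be finite nonempty sets, k ≥ 2, and let g, g̃ : assignments with g_{−j}, g̃_{−j} : ∏_{i≠j} X_i → [0,1] for each j ∈ [k]. Suppose that for every j and all functions a_i : (tuples omitting coordinates i and j) → [0,1] (i ≠ j), |E_{x}[(g_{−j} − g̃_{−j})(x_{−j}) ∏_{i≠j} a_i(x_{−i,j})]| ≤ ε. Then |E_{x_1,…,x_k}[∏_{j=1}^k g_{−j}(x_{−j}) − ∏_{j=1}^k g̃_{−j}(x_{−j})]| ≤ k·ε. -/

import Mathlib

open Finset

/-- Telescoping identity for a difference of products. -/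
lemma telescope_prod_sub_prod {ι α : Type*} [LinearOrder ι] [CommRing α]
    (s : Finset ι) (f g : ι → α) :
    (∏ i ∈ s, f i) - ∏ i ∈ s, g i =
      ∑ i ∈ s, (∏ l ∈ s.filter (fun b => b < i), g l) * (f i - g i) *
        ∏ l ∈ s.filter (fun b => i < b), f l := by
  classical
  induction s using Finset.induction_on_min with
  | empty => simp
  | insert a s hmin ih =>
    have ha : a ∉ s := fun h => lt_irrefl a (hmin a h)
    rw [Finset.prod_insert ha, Finset.prod_insert ha, Finset.sum_insert ha]
    have h1 : (insert a s).filter (fun b => b < a) = ∅ := by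
      ext b
      simp only [Finset.mem_filter, Finset.mem_insert, Finset.notMem_empty, iff_false]
      rintro ⟨rfl | hb, hlt⟩
      · exact lt_irrefl _ hlt
      · exact absurd hlt (not_lt.2 (hmin b hb).le)
    have h2 : (insert a s).filter (fun b => a < b) = s := by
      ext b
      simp only [Finset.mem_filter, Finset.mem_insert]
      constructor
      · rintro ⟨rfl | hb, hlt⟩
        · exact absurd hlt (lt_irrefl _)
        · exact hb
      · exact fun hb => ⟨Or.inr hb, hmin b hb⟩
    have h3 : ∀ i ∈ s, (insert a s).filter (fun b => b < i) =
        insert a (s.filter (fun b => b < i)) := by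
      intro i hi
      rw [Finset.filter_insert, if_pos (hmin i hi)]
    have h4 : ∀ i ∈ s, (insert a s).filter (fun b => i < b) =
        s.filter (fun b => i < b) := by
      intro i hi
      rw [Finset.filter_insert, if_neg (asymm (hmin i hi))]
    rw [h1, h2]
    have h5 : ∑ i ∈ s, (∏ l ∈ (insert a s).filter (fun b => b < i), g l) * (f i - g i) *
        ∏ l ∈ (insert a s).filter (fun b => i < b), f l =
        g a * ∑ i ∈ s, (∏ l ∈ s.filter (fun b => b < i), g l) * (f i - g i) *
        ∏ l ∈ s.filter (fun b => i < b), f l := by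
      rw [Finset.mul_sum]
      refine Finset.sum_congr rfl fun i hi => ?_
      rw [h3 i hi, h4 i hi, Finset.prod_insert (fun h => ha (Finset.mem_filter.1 h).1)]
      ring
    rw [h5, ← ih]
    simp only [Finset.prod_empty]
    ring

/-- Summing `f ∘ (update · j c)` over all `x` and all `c` gives `card (X j)` times the sum. -/
lemma sum_update_eq {k : ℕ} {X : Fin k → Type*} [∀ i, Fintype (X i)]
    (j : Fin k) (f : (∀ i, X i) → ℝ) :
    ∑ c : X j, ∑ x : ∀ i, X i, f (Function.update x j c)
      = (Fintype.card (X j) : ℝ) * ∑ x : ∀ i, X i, f x := by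
  classical
  set e := Equiv.piSplitAt j X with he
  have h1 : ∀ (c : X j) (x : ∀ i, X i),
      Function.update x j c = e.symm (c, fun i : {i : Fin k // i ≠ j} => x i.1) := by
    intro c x
    apply e.injective
    rw [Equiv.apply_symm_apply]
    refine Prod.ext ?_ ?_
    · exact Function.update_self _ _ _
    · exact funext fun i => Function.update_of_ne i.2 _ _
  have h2 : ∀ p : X j × (∀ i : {i : Fin k // i ≠ j}, X i.1),
      (fun i : {i : Fin k // i ≠ j} => e.symm p i.1) = p.2 := by
    intro p
    exact congrArg Prod.snd (e.apply_symm_apply p)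
  calc ∑ c : X j, ∑ x : ∀ i, X i, f (Function.update x j c)
      = ∑ c : X j, ∑ x : ∀ i, X i, f (e.symm (c, fun i => x i.1)) := by
        exact Finset.sum_congr rfl fun c _ => Finset.sum_congr rfl fun x _ => by rw [h1]
    _ = ∑ c : X j, ∑ p : X j × (∀ i : {i : Fin k // i ≠ j}, X i.1), f (e.symm (c, p.2)) := by
        refine Finset.sum_congr rfl fun c _ => ?_
        rw [← Equiv.sum_comp e.symm (fun x => f (e.symm (c, fun i => x i.1)))]
        exact Finset.sum_congr rfl fun p _ => by rw [h2]
    _ = ∑ c : X j, (Fintype.card (X j) : ℝ) *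
          ∑ y : ∀ i : {i : Fin k // i ≠ j}, X i.1, f (e.symm (c, y)) := by
        refine Finset.sum_congr rfl fun c _ => ?_
        rw [Fintype.sum_prod_type]
        simp [Finset.sum_const, nsmul_eq_mul, Finset.mul_sum]
    _ = (Fintype.card (X j) : ℝ) *
          ∑ p : X j × (∀ i : {i : Fin k // i ≠ j}, X i.1), f (e.symm p) := by
        rw [← Finset.mul_sum, Fintype.sum_prod_type]
    _ = (Fintype.card (X j) : ℝ) * ∑ x : ∀ i, X i, f x := by
        rw [Equiv.sum_comp e.symm f]

/-- Key single-coordinate bound. -/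
lemma key_bound {k : ℕ} {X : Fin k → Type*} [∀ i, Fintype (X i)] [∀ i, Nonempty (X i)]
    {ε : ℝ} (j : Fin k)
    (D : (∀ i : {i : Fin k // i ≠ j}, X i.1) → ℝ)
    (H : (i : {i : Fin k // i ≠ j}) → ((∀ l : {l : Fin k // l ≠ i.1}, X l.1) → ℝ))
    (hH : ∀ i y, H i y ∈ Set.Icc (0 : ℝ) 1)
    (hcut : ∀ a : (i : {i : Fin k // i ≠ j}) →
        ((∀ l : {l : Fin k // l ≠ i.1 ∧ l ≠ j}, X l.1) → ℝ),
      (∀ i y, a i y ∈ Set.Icc (0 : ℝ) 1) →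
      |(∑ x : ∀ i, X i,
          D (fun i => x i.1) * ∏ i : {i : Fin k // i ≠ j}, a i (fun l => x l.1)) /
        (Fintype.card (∀ i, X i) : ℝ)| ≤ ε) :
    |(∑ x : ∀ i, X i,
        D (fun i => x i.1) * ∏ i : {i : Fin k // i ≠ j}, H i (fun l => x l.1)) /
      (Fintype.card (∀ i, X i) : ℝ)| ≤ ε := by
  classical
  set f : (∀ i, X i) → ℝ :=
    fun x => D (fun i => x i.1) * ∏ i : {i : Fin k // i ≠ j}, H i (fun l => x l.1) with hf
  set N : ℝ := (Fintype.card (∀ i, X i) : ℝ) with hN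
  set m : ℝ := (Fintype.card (X j) : ℝ) with hm
  have hm0 : 0 < m := by
    rw [hm]; exact_mod_cast Fintype.card_pos
  -- the conditioned test functions
  set a : X j → (i : {i : Fin k // i ≠ j}) →
      ((∀ l : {l : Fin k // l ≠ i.1 ∧ l ≠ j}, X l.1) → ℝ) :=
    fun c i y => H i (fun l => if h : l.1 = j then cast (congrArg X h.symm) c
      else y ⟨l.1, ⟨l.2, h⟩⟩) with ha
  have hamem : ∀ c i y, a c i y ∈ Set.Icc (0 : ℝ) 1 := fun c i y => hH i _
  have hupdate : ∀ (c : X j) (x : ∀ i, X i),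
      f (Function.update x j c) = D (fun i => x i.1) *
        ∏ i : {i : Fin k // i ≠ j}, a c i (fun l => x l.1) := by
    intro c x
    have hD : (fun i : {i : Fin k // i ≠ j} => Function.update x j c i.1)
        = fun i : {i : Fin k // i ≠ j} => x i.1 :=
      funext fun i => Function.update_of_ne i.2 _ _
    show D (fun i => Function.update x j c i.1) *
        ∏ i : {i : Fin k // i ≠ j}, H i (fun l => Function.update x j c l.1) = _
    rw [hD]
    congr 1
    refine Finset.prod_congr rfl fun i _ => ?_
    show H i _ = H i _
    congr 1
    funext l
    by_cases h : l.1 = j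
    · obtain ⟨l, hl⟩ := l
      dsimp only at h ⊢
      subst h
      simp
    · simp [Function.update_of_ne h, h]
  have hsum : ∑ c : X j, ∑ x : ∀ i, X i, f (Function.update x j c) = m * ∑ x, f x :=
    sum_update_eq j f
  have hbd : ∀ c : X j, |(∑ x : ∀ i, X i, f (Function.update x j c)) / N| ≤ ε := by
    intro c
    have := hcut (a c) (hamem c)
    calc |(∑ x : ∀ i, X i, f (Function.update x j c)) / N|
        = |(∑ x : ∀ i, X i, D (fun i => x i.1) *
            ∏ i : {i : Fin k // i ≠ j}, a c i (fun l => x l.1)) / N| := by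
          congr 2
          exact Finset.sum_congr rfl fun x _ => hupdate c x
      _ ≤ ε := this
  have hA : |∑ c : X j, (∑ x : ∀ i, X i, f (Function.update x j c)) / N| ≤ m * ε := by
    calc |∑ c : X j, (∑ x : ∀ i, X i, f (Function.update x j c)) / N|
        ≤ ∑ c : X j, |(∑ x : ∀ i, X i, f (Function.update x j c)) / N| :=
          Finset.abs_sum_le_sum_abs _ _
      _ ≤ ∑ _c : X j, ε := Finset.sum_le_sum fun c _ => hbd c
      _ = m * ε := by rw [Finset.sum_const, nsmul_eq_mul, Finset.card_univ, ← hm]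
  have hfinal : m * |(∑ x : ∀ i, X i, f x) / N|
      = |∑ c : X j, (∑ x : ∀ i, X i, f (Function.update x j c)) / N| := by
    rw [← Finset.sum_div, hsum, mul_div_assoc, abs_mul, abs_of_pos hm0]
  show |(∑ x : ∀ i, X i, f x) / N| ≤ ε
  have hmle : m * |(∑ x : ∀ i, X i, f x) / N| ≤ m * ε := hfinal ▸ hA
  exact le_of_mul_le_mul_left hmle hm0

theorem stmt_3 (k : ℕ) (hk : 2 ≤ k) (X : Fin k → Type*)
    [∀ i, Fintype (X i)] [∀ i, Nonempty (X i)] (ε : ℝ)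
    (g gt : (j : Fin k) → ((∀ i : {i : Fin k // i ≠ j}, X i.1) → ℝ))
    (hgmem : ∀ j y, g j y ∈ Set.Icc (0 : ℝ) 1)
    (hgtmem : ∀ j y, gt j y ∈ Set.Icc (0 : ℝ) 1)
    (hcut : ∀ j : Fin k,
      ∀ a : (i : {i : Fin k // i ≠ j}) →
        ((∀ l : {l : Fin k // l ≠ i.1 ∧ l ≠ j}, X l.1) → ℝ),
      (∀ i y, a i y ∈ Set.Icc (0 : ℝ) 1) →
      |(∑ x : ∀ i, X i,
          (g j (fun i => x i.1) - gt j (fun i => x i.1)) *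
            ∏ i : {i : Fin k // i ≠ j}, a i (fun l => x l.1)) /
          (Fintype.card (∀ i, X i) : ℝ)| ≤ ε) :
    |(∑ x : ∀ i, X i,
        ((∏ j, g j (fun i => x i.1)) - ∏ j, gt j (fun i => x i.1))) /
        (Fintype.card (∀ i, X i) : ℝ)| ≤ k * ε := by
  classical
  set N : ℝ := (Fintype.card (∀ i, X i) : ℝ) with hN
  -- the telescoping term for coordinate j
  set T : Fin k → (∀ i, X i) → ℝ := fun j x =>
    (g j (fun i => x i.1) - gt j (fun i => x i.1)) *
      ∏ i : {i : Fin k // i ≠ j},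
        (if i.1 < j then gt i.1 else g i.1) (fun l => x l.1) with hT
  -- each telescoping term is small
  have hTj : ∀ j : Fin k, |(∑ x : ∀ i, X i, T j x) / N| ≤ ε := by
    intro j
    refine key_bound j (fun y => g j y - gt j y)
      (fun i => if i.1 < j then gt i.1 else g i.1) ?_ ?_
    · intro i y
      by_cases h : i.1 < j
      · simp only [if_pos h]; exact hgtmem _ _
      · simp only [if_neg h]; exact hgmem _ _
    · intro a hamem
      exact hcut j a hamem
  -- telescoping identity pointwise
  have htel : ∀ x : ∀ i, X i,
      (∏ j, g j (fun i => x i.1)) - ∏ j, gt j (fun i => x i.1) = ∑ j, T j x := by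
    intro x
    have := telescope_prod_sub_prod Finset.univ
      (fun j : Fin k => g j (fun i => x i.1)) (fun j : Fin k => gt j (fun i => x i.1))
    rw [this]
    refine Finset.sum_congr rfl fun j _ => ?_
    rw [hT]
    dsimp only
    -- rewrite the subtype product as a product over filter (· ≠ j) and split
    have hsplit : ∀ G : Fin k → ℝ,
        ∏ i : {i : Fin k // i ≠ j}, G i.1 =
          (∏ l ∈ Finset.univ.filter (fun b => b < j), G l) *
            ∏ l ∈ Finset.univ.filter (fun b => j < b), G l := by
      intro G
      rw [← Finset.prod_union]
      · rw [← Finset.prod_subtype (Finset.univ.filter (fun b => b ≠ j))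
          (fun i => by simp) G]
        congr 1
        ext b
        simp only [Finset.mem_union, Finset.mem_filter, Finset.mem_univ, true_and]
        exact ne_iff_lt_or_gt
      · rw [Finset.disjoint_filter]
        intro b _ h1
        simp [asymm h1]
    have := hsplit (fun i => (if i < j then gt i else g i) (fun l => x l.1))
    rw [show (∏ i : {i : Fin k // i ≠ j},
        (if i.1 < j then gt i.1 else g i.1) (fun l => x l.1)) =
        ∏ i : {i : Fin k // i ≠ j},
          (fun i' => (if i' < j then gt i' else g i') (fun l => x l.1)) i.1 from rfl, this]
    have hlt : ∀ l ∈ Finset.univ.filter (fun b => b < j),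
        (if l < j then gt l else g l) (fun l' : {l' : Fin k // l' ≠ l} => x l'.1)
          = gt l (fun l' => x l'.1) := by
      intro l hl
      rw [if_pos (Finset.mem_filter.1 hl).2]
    have hgt : ∀ l ∈ Finset.univ.filter (fun b => j < b),
        (if l < j then gt l else g l) (fun l' : {l' : Fin k // l' ≠ l} => x l'.1)
          = g l (fun l' => x l'.1) := by
      intro l hl
      rw [if_neg (asymm (Finset.mem_filter.1 hl).2)]
    rw [Finset.prod_congr rfl hlt, Finset.prod_congr rfl hgt]
    ring
  calc |(∑ x : ∀ i, X i,
        ((∏ j, g j (fun i => x i.1)) - ∏ j, gt j (fun i => x i.1))) / N|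
      = |∑ j : Fin k, (∑ x : ∀ i, X i, T j x) / N| := by
        rw [← Finset.sum_div]
        congr 2
        rw [Finset.sum_congr rfl fun x _ => htel x, Finset.sum_comm]
    _ ≤ ∑ j : Fin k, |(∑ x : ∀ i, X i, T j x) / N| := Finset.abs_sum_le_sum_abs _ _
    _ ≤ ∑ _j : Fin k, ε := Finset.sum_le_sum fun j _ => hTj j
    _ = k * ε := by rw [Finset.sum_const, nsmul_eq_mul, Finset.card_univ, Fintype.card_fin]
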